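/- For every time horizon T ≥ 2 and number of experts n ≥ 2, there is a deterministic prediction strategy under apple tasting feedback that makes at most 7√(T log₂ n) + 1 mistakes on any realizable sequence of expert predictions of length T. -/

import Mathlib

/-- A deterministic learner for prediction with expert advice under apple tasting
feedback: it maps the history (experts' predictions and, when the learner predicted `1`,
the revealed true label) together with the current experts' predictions to a prediction. -/
def ExpertLearner (n : ℕ) : Type :=
  List ((Fin n → Bool) × Option Bool) → (Fin n → Bool) → Bool

/-- The feedback history produced by running learner `Lrn` on expert predictions `P`
and true labels `y` under apple tasting feedback. -/
def histE (n : ℕ) (Lrn : ExpertLearner n) (P : ℕ → Fin n → Bool) (y : ℕ → Bool) :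
    ℕ → List ((Fin n → Bool) × Option Bool)
  | 0 => []
  | t + 1 =>
      histE n Lrn P y t ++
        [(P t, if Lrn (histE n Lrn P y t) (P t) = true then some (y t) else none)]

/-- The learner's prediction in round `t`. -/
def predE (n : ℕ) (Lrn : ExpertLearner n) (P : ℕ → Fin n → Bool) (y : ℕ → Bool)
    (t : ℕ) : Bool :=
  Lrn (histE n Lrn P y t) (P t)

/-- The number of mistakes made by the learner during the first `T` rounds. -/
def mistakesE (n : ℕ) (Lrn : ExpertLearner n) (P : ℕ → Fin n → Bool) (y : ℕ → Bool)
    (T : ℕ) : ℕ :=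
  ((Finset.range T).filter (fun t => predE n Lrn P y t ≠ y t)).card


/-- state update -/
def stepSt (n : ℕ) (s : Finset (Fin n) × (Fin n → ℕ)) (e : (Fin n → Bool) × Option Bool) :
    Finset (Fin n) × (Fin n → ℕ) :=
  match e.2 with
  | none => (s.1, fun i => s.2 i + (if e.1 i then 1 else 0))
  | some b => (s.1.filter fun i => e.1 i = b, s.2)

def stateOf (n : ℕ) (h : List ((Fin n → Bool) × Option Bool)) :
    Finset (Fin n) × (Fin n → ℕ) :=
  h.foldl (stepSt n) (Finset.univ, fun _ => 0)

open Classical in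
noncomputable def wLearner (n : ℕ) (ε : ℝ) : ExpertLearner n := fun h x =>
  if ε * (∑ i ∈ (stateOf n h).1, (1+ε)^((stateOf n h).2 i)) ≤
      ∑ i ∈ (stateOf n h).1.filter (fun i => x i), (1+ε)^((stateOf n h).2 i)
  then true else false

lemma wLearner_iff (n : ℕ) (ε : ℝ) (h : List ((Fin n → Bool) × Option Bool))
    (x : Fin n → Bool) :
    wLearner n ε h x = true ↔
      ε * (∑ i ∈ (stateOf n h).1, (1+ε)^((stateOf n h).2 i)) ≤
        ∑ i ∈ (stateOf n h).1.filter (fun i => x i), (1+ε)^((stateOf n h).2 i) := by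
  unfold wLearner
  split <;> simp_all

section Analysis

variable (n : ℕ) (ε : ℝ) (P : ℕ → Fin n → Bool) (y : ℕ → Bool)

noncomputable def St (t : ℕ) : Finset (Fin n) × (Fin n → ℕ) :=
  stateOf n (histE n (wLearner n ε) P y t)

noncomputable def Wt (t : ℕ) : ℝ := ∑ i ∈ (St n ε P y t).1, (1+ε)^((St n ε P y t).2 i)

noncomputable def W1t (t : ℕ) : ℝ :=
  ∑ i ∈ (St n ε P y t).1.filter (fun i => P t i), (1+ε)^((St n ε P y t).2 i)

noncomputable def pr (t : ℕ) : Bool := predE n (wLearner n ε) P y t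

lemma pr_iff (t : ℕ) : pr n ε P y t = true ↔ ε * Wt n ε P y t ≤ W1t n ε P y t :=
  wLearner_iff n ε _ _

lemma St_succ (t : ℕ) :
    St n ε P y (t+1) = stepSt n (St n ε P y t)
      (P t, if pr n ε P y t = true then some (y t) else none) := by
  have h : histE n (wLearner n ε) P y (t+1)
      = histE n (wLearner n ε) P y t ++
        [(P t, if pr n ε P y t = true then some (y t) else none)] := rfl
  unfold St stateOf
  rw [h, List.foldl_append]
  rfl

noncomputable def m0 (t : ℕ) : ℕ :=
  ((Finset.range t).filter (fun s => pr n ε P y s = false ∧ y s = true)).card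

noncomputable def m1 (t : ℕ) : ℕ :=
  ((Finset.range t).filter (fun s => pr n ε P y s = true ∧ y s = false)).card

lemma mistakes_eq (T : ℕ) :
    mistakesE n (wLearner n ε) P y T = m0 n ε P y T + m1 n ε P y T := by
  unfold mistakesE m0 m1
  rw [← Finset.card_union_of_disjoint]
  · congr 1
    ext t
    simp only [Finset.mem_filter, Finset.mem_union]
    have : predE n (wLearner n ε) P y t = pr n ε P y t := rfl
    rw [this]
    cases h1 : pr n ε P y t <;> cases h2 : y t <;> simp
  · rw [Finset.disjoint_left]
    intro t h1 h2
    simp only [Finset.mem_filter] at h1 h2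
    rw [h1.2.1] at h2
    exact absurd h2.2.1 (by simp)

end Analysis

section Analysis2

variable (n : ℕ) (ε : ℝ) (P : ℕ → Fin n → Bool) (y : ℕ → Bool)

lemma St0 : St n ε P y 0 = (Finset.univ, fun _ => 0) := rfl

lemma Wt_nonneg (hε : 0 ≤ ε) (t : ℕ) : 0 ≤ Wt n ε P y t :=
  Finset.sum_nonneg fun i _ => pow_nonneg (by linarith) _

lemma W1t_nonneg (hε : 0 ≤ ε) (t : ℕ) : 0 ≤ W1t n ε P y t :=
  Finset.sum_nonneg fun i _ => pow_nonneg (by linarith) _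

lemma Wt_succ_boost (hε : 0 ≤ ε) (t : ℕ) (hb : pr n ε P y t = false) :
    Wt n ε P y (t+1) = Wt n ε P y t + ε * W1t n ε P y t := by
  have hSS := St_succ n ε P y t
  rw [hb] at hSS
  simp only [Bool.false_eq_true, if_false] at hSS
  unfold Wt W1t
  rw [hSS]
  show (∑ i ∈ (St n ε P y t).1, (1+ε)^((St n ε P y t).2 i + if P t i then 1 else 0)) = _
  rw [← Finset.sum_filter_add_sum_filter_not (St n ε P y t).1 (fun i => P t i = true)]
  have h1 : ∑ i ∈ (St n ε P y t).1.filter (fun i => P t i = true),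
      (1+ε)^((St n ε P y t).2 i + if P t i then 1 else 0)
      = (1+ε) * ∑ i ∈ (St n ε P y t).1.filter (fun i => P t i = true),
          (1+ε)^((St n ε P y t).2 i) := by
    rw [Finset.mul_sum]
    apply Finset.sum_congr rfl
    intro i hi
    rw [Finset.mem_filter] at hi
    rw [hi.2, if_pos rfl, pow_succ]
    ring
  have h2 : ∑ i ∈ (St n ε P y t).1.filter (fun i => ¬(P t i = true)),
      (1+ε)^((St n ε P y t).2 i + if P t i then 1 else 0)
      = ∑ i ∈ (St n ε P y t).1.filter (fun i => ¬(P t i = true)),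
          (1+ε)^((St n ε P y t).2 i) := by
    apply Finset.sum_congr rfl
    intro i hi
    rw [Finset.mem_filter] at hi
    rw [Bool.not_eq_true] at hi
    rw [hi.2]
    simp
  rw [h1, h2]
  have h3 : ∑ i ∈ (St n ε P y t).1.filter (fun i => ¬(P t i = true)),
      (1+ε)^((St n ε P y t).2 i)
      = Wt n ε P y t - W1t n ε P y t := by
    unfold Wt W1t
    rw [← Finset.sum_filter_add_sum_filter_not (St n ε P y t).1 (fun i => P t i = true)]
    ring
  rw [h3]
  simp only [Wt, W1t]
  ring

lemma Wt_succ_one_true (t : ℕ) (hb : pr n ε P y t = true) (hy : y t = true) :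
    Wt n ε P y (t+1) = W1t n ε P y t := by
  have hSS := St_succ n ε P y t
  rw [hb] at hSS
  simp only [if_true] at hSS
  rw [hy] at hSS
  unfold Wt W1t
  rw [hSS]
  rfl

lemma Wt_succ_one_false (t : ℕ) (hb : pr n ε P y t = true) (hy : y t = false) :
    Wt n ε P y (t+1) = Wt n ε P y t - W1t n ε P y t := by
  have hSS := St_succ n ε P y t
  rw [hb] at hSS
  simp only [if_true] at hSS
  rw [hy] at hSS
  unfold Wt W1t
  rw [hSS]
  show (∑ i ∈ (St n ε P y t).1.filter (fun i => P t i = false),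
      (1+ε)^((St n ε P y t).2 i)) = _
  have : (St n ε P y t).1.filter (fun i => P t i = false)
      = (St n ε P y t).1.filter (fun i => ¬(P t i = true)) := by
    apply Finset.filter_congr
    intro i _
    simp
  rw [this]
  have h4 := Finset.sum_filter_add_sum_filter_not (St n ε P y t).1 (fun i => P t i = true)
    (fun i => (1+ε)^((St n ε P y t).2 i))
  linarith [h4]

end Analysis2

section Analysis3

variable (n : ℕ) (ε : ℝ) (P : ℕ → Fin n → Bool) (y : ℕ → Bool) (T : ℕ) (j : Fin n)

lemma m0_succ (t : ℕ) : m0 n ε P y (t+1) =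
    m0 n ε P y t + if pr n ε P y t = false ∧ y t = true then 1 else 0 := by
  unfold m0
  rw [Finset.range_add_one, Finset.filter_insert]
  split
  · rw [Finset.card_insert_of_notMem (by simp)]
  · omega

lemma m1_succ (t : ℕ) : m1 n ε P y (t+1) =
    m1 n ε P y t + if pr n ε P y t = true ∧ y t = false then 1 else 0 := by
  unfold m1
  rw [Finset.range_add_one, Finset.filter_insert]
  split
  · rw [Finset.card_insert_of_notMem (by simp)]
  · omega

lemma j_mem (hj : ∀ t < T, P t j = y t) : ∀ t ≤ T, j ∈ (St n ε P y t).1 := by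
  intro t
  induction t with
  | zero => intro _; rw [St0]; exact Finset.mem_univ j
  | succ t ih =>
    intro ht
    have ht' : t ≤ T := by omega
    rw [St_succ]
    cases hb : pr n ε P y t with
    | false =>
      simp only [Bool.false_eq_true, if_false]
      show j ∈ (St n ε P y t).1
      exact ih ht'
    | true =>
      simp only [if_true]
      show j ∈ (St n ε P y t).1.filter (fun i => P t i = y t)
      rw [Finset.mem_filter]
      exact ⟨ih ht', hj t (by omega)⟩

lemma cj_eq (hj : ∀ t < T, P t j = y t) : ∀ t ≤ T, (St n ε P y t).2 j = m0 n ε P y t := by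
  intro t
  induction t with
  | zero => intro _; rw [St0]; rfl
  | succ t ih =>
    intro ht
    have ht' : t ≤ T := by omega
    rw [St_succ, m0_succ]
    cases hb : pr n ε P y t with
    | false =>
      simp only [Bool.false_eq_true, if_false]
      show (St n ε P y t).2 j + (if P t j then 1 else 0) = _
      rw [ih ht', hj t (by omega)]
      cases hy : y t <;> simp
    | true =>
      simp only [if_true]
      show (St n ε P y t).2 j = _
      rw [ih ht']
      simp

lemma pow_le_Wt (hε : 0 ≤ ε) (hj : ∀ t < T, P t j = y t) :
    ∀ t ≤ T, (1+ε)^(m0 n ε P y t) ≤ Wt n ε P y t := by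
  intro t ht
  have h1 : (1+ε)^((St n ε P y t).2 j) ≤ Wt n ε P y t := by
    unfold Wt
    exact Finset.single_le_sum (fun i _ => pow_nonneg (by linarith : (0:ℝ) ≤ 1+ε) _)
      (j_mem n ε P y T j hj t ht)
  rwa [cj_eq n ε P y T j hj t ht] at h1

lemma Wt_le (hε0 : 0 ≤ ε) (hε1 : ε ≤ 1) :
    ∀ t, Wt n ε P y t ≤ (n : ℝ) * (1+ε^2)^t * (1-ε)^(m1 n ε P y t) := by
  intro t
  induction t with
  | zero =>
    have : Wt n ε P y 0 = n := by
      unfold Wt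
      rw [St0]
      simp
    rw [this]
    show (n : ℝ) ≤ n * 1 * (1-ε)^(m1 n ε P y 0)
    have : m1 n ε P y 0 = 0 := by unfold m1; simp
    rw [this]
    simp
  | succ t ih =>
    have hWnn := Wt_nonneg n ε P y hε0 t
    have hW1nn := W1t_nonneg n ε P y hε0 t
    have hBnn : (0:ℝ) ≤ (n : ℝ) * (1+ε^2)^t * (1-ε)^(m1 n ε P y t) := by
      apply mul_nonneg (mul_nonneg (by positivity) (by positivity))
      exact pow_nonneg (by linarith) _
    rw [m1_succ]
    cases hb : pr n ε P y t with
    | false =>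
      have hlt : ¬ (ε * Wt n ε P y t ≤ W1t n ε P y t) := by
        intro h
        rw [← pr_iff] at h
        rw [hb] at h
        exact Bool.false_ne_true h
      push_neg at hlt
      rw [Wt_succ_boost n ε P y hε0 t hb]
      have : Wt n ε P y t + ε * W1t n ε P y t ≤ (1+ε^2) * Wt n ε P y t := by
        nlinarith
      simp only [hb, Bool.false_eq_true, false_and, if_false, Nat.add_zero]
      calc Wt n ε P y t + ε * W1t n ε P y t ≤ (1+ε^2) * Wt n ε P y t := this
        _ ≤ (1+ε^2) * ((n : ℝ) * (1+ε^2)^t * (1-ε)^(m1 n ε P y t)) := by nlinarith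
        _ = (n : ℝ) * (1+ε^2)^(t+1) * (1-ε)^(m1 n ε P y t) := by ring
    | true =>
      have hge : ε * Wt n ε P y t ≤ W1t n ε P y t := by
        rw [← pr_iff]; exact hb
      cases hy : y t with
      | true =>
        rw [Wt_succ_one_true n ε P y t hb hy]
        have hsub : W1t n ε P y t ≤ Wt n ε P y t := by
          unfold Wt W1t
          exact Finset.sum_le_sum_of_subset_of_nonneg (Finset.filter_subset _ _)
            (fun i _ _ => pow_nonneg (by linarith) _)
        simp only [hb, hy, Bool.true_eq_false, and_false, if_false, Nat.add_zero]
        calc W1t n ε P y t ≤ Wt n ε P y t := hsub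
          _ ≤ (n : ℝ) * (1+ε^2)^t * (1-ε)^(m1 n ε P y t) := ih
          _ ≤ (1+ε^2) * ((n : ℝ) * (1+ε^2)^t * (1-ε)^(m1 n ε P y t)) :=
              le_mul_of_one_le_left hBnn (by nlinarith)
          _ = (n : ℝ) * (1+ε^2)^(t+1) * (1-ε)^(m1 n ε P y t) := by ring
      | false =>
        rw [Wt_succ_one_false n ε P y t hb hy]
        simp only [hb, hy, and_self, if_true]
        calc Wt n ε P y t - W1t n ε P y t ≤ (1-ε) * Wt n ε P y t := by nlinarith
          _ ≤ (1-ε) * ((n : ℝ) * (1+ε^2)^t * (1-ε)^(m1 n ε P y t)) := by nlinarith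
          _ ≤ (1+ε^2) * ((1-ε) * ((n : ℝ) * (1+ε^2)^t * (1-ε)^(m1 n ε P y t))) :=
              le_mul_of_one_le_left (mul_nonneg (by linarith) hBnn) (by nlinarith)
          _ = (n : ℝ) * (1+ε^2)^(t+1) * (1-ε)^(m1 n ε P y t + 1) := by ring

end Analysis3

lemma main_bound (n T : ℕ) (ε : ℝ) (hn : 2 ≤ n) (hε0 : 0 < ε) (hε1 : ε < 1)
    (P : ℕ → Fin n → Bool) (y : ℕ → Bool) (j : Fin n) (hj : ∀ t < T, P t j = y t) :
    (mistakesE n (wLearner n ε) P y T : ℝ) * ε ≤ 3 * (Real.log n + T * ε^2) := by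
  have hε0' : (0:ℝ) ≤ ε := le_of_lt hε0
  have h1e : (0:ℝ) < 1 + ε := by linarith
  have hnpos : (0:ℝ) < n := by positivity
  -- upper bound on W T
  have hWle := Wt_le n ε P y hε0' (le_of_lt hε1) T
  have hWge := pow_le_Wt n ε P y T j hε0' hj T le_rfl
  have hm1pow : (0:ℝ) < (1-ε)^(m1 n ε P y T) := pow_pos (by linarith) _
  have hm1le : (1-ε)^(m1 n ε P y T) ≤ 1 := pow_le_one₀ (by linarith) (by linarith)
  have hpowpos : (0:ℝ) < (1+ε^2)^T := pow_pos (by positivity) _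
  -- log facts
  have hlog1 : Real.log (1+ε^2) ≤ ε^2 := by
    have := Real.log_le_sub_one_of_pos (show (0:ℝ) < 1+ε^2 by positivity)
    linarith
  have hlog2 : ε/2 ≤ Real.log (1+ε) := by
    have h := Real.log_le_sub_one_of_pos (show (0:ℝ) < (1+ε)⁻¹ by positivity)
    rw [Real.log_inv] at h
    have hinv : (1+ε)⁻¹ - 1 = -(ε/(1+ε)) := by
      field_simp
      ring
    rw [hinv] at h
    have h2 : ε/(1+ε) ≤ Real.log (1+ε) := by linarith
    have h3 : ε/2 ≤ ε/(1+ε) := by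
      rw [div_le_div_iff₀ (by norm_num) h1e]
      nlinarith
    linarith
  have hlog3 : ε ≤ -Real.log (1-ε) := by
    have := Real.log_le_sub_one_of_pos (show (0:ℝ) < 1-ε by linarith)
    linarith
  have hlogn : 0 ≤ Real.log n := Real.log_nonneg (by exact_mod_cast Nat.one_le_of_lt hn)
  -- m0 bound
  have hm0 : (m0 n ε P y T : ℝ) * ε ≤ 2 * (Real.log n + T * ε^2) := by
    have hchain : (1+ε)^(m0 n ε P y T) ≤ (n:ℝ) * (1+ε^2)^T := by
      calc (1+ε)^(m0 n ε P y T) ≤ Wt n ε P y T := hWge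
        _ ≤ (n : ℝ) * (1+ε^2)^T * (1-ε)^(m1 n ε P y T) := hWle
        _ ≤ (n : ℝ) * (1+ε^2)^T * 1 := by
            apply mul_le_mul_of_nonneg_left hm1le (by positivity)
        _ = (n : ℝ) * (1+ε^2)^T := by ring
    have hloglhs := Real.log_le_log (pow_pos h1e _) hchain
    rw [Real.log_pow, Real.log_mul (ne_of_gt hnpos) (ne_of_gt hpowpos), Real.log_pow] at hloglhs
    have : (m0 n ε P y T : ℝ) * (ε/2) ≤ Real.log n + T * ε^2 := by
      calc (m0 n ε P y T : ℝ) * (ε/2) ≤ (m0 n ε P y T : ℝ) * Real.log (1+ε) := by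
            apply mul_le_mul_of_nonneg_left hlog2 (Nat.cast_nonneg _)
        _ ≤ Real.log n + T * Real.log (1+ε^2) := hloglhs
        _ ≤ Real.log n + T * ε^2 := by
            have : (T:ℝ) * Real.log (1+ε^2) ≤ T * ε^2 :=
              mul_le_mul_of_nonneg_left hlog1 (Nat.cast_nonneg _)
            linarith
    linarith
  -- m1 bound
  have hm1 : (m1 n ε P y T : ℝ) * ε ≤ Real.log n + T * ε^2 := by
    have hone : (1:ℝ) ≤ (n : ℝ) * (1+ε^2)^T * (1-ε)^(m1 n ε P y T) := by
      calc (1:ℝ) ≤ (1+ε)^(m0 n ε P y T) := one_le_pow₀ (by linarith)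
        _ ≤ Wt n ε P y T := hWge
        _ ≤ _ := hWle
    have hloglhs := Real.log_le_log (by norm_num) hone
    rw [Real.log_one, Real.log_mul (by positivity) (ne_of_gt hm1pow),
      Real.log_mul (ne_of_gt hnpos) (ne_of_gt hpowpos), Real.log_pow, Real.log_pow] at hloglhs
    have h4 : (m1 n ε P y T : ℝ) * ε ≤ (m1 n ε P y T : ℝ) * (-Real.log (1-ε)) :=
      mul_le_mul_of_nonneg_left hlog3 (Nat.cast_nonneg _)
    have h5 : (T:ℝ) * Real.log (1+ε^2) ≤ T * ε^2 :=
      mul_le_mul_of_nonneg_left hlog1 (Nat.cast_nonneg _)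
    nlinarith
  rw [mistakes_eq]
  push_cast
  nlinarith


/-- For every `T ≥ 2` and `n ≥ 2` there is a deterministic apple tasting learner
(`RealizableExpAT` with `L = n`, `η = √(log₂ n / T)`) making at most
`7√(T log₂ n) + 1` mistakes on every realizable sequence of length `T`. -/
theorem experts_realizable_upper_bound (n T : ℕ) (hn : 2 ≤ n) (hT : 2 ≤ T) :
    ∃ Lrn : ExpertLearner n, ∀ (P : ℕ → Fin n → Bool) (y : ℕ → Bool),
      (∃ j : Fin n, ∀ t < T, P t j = y t) →
      (mistakesE n Lrn P y T : ℝ) ≤ 7 * Real.sqrt (T * Real.logb 2 n) + 1 := by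
  have hn1 : (1:ℝ) < n := by exact_mod_cast hn
  have hlogpos : 0 < Real.log n := Real.log_pos hn1
  have hTpos : (0:ℝ) < T := by positivity
  have hlog2pos : 0 < Real.log 2 := Real.log_pos (by norm_num)
  have hlog2le : Real.log 2 ≤ 1 := by
    have := Real.log_le_sub_one_of_pos (show (0:ℝ) < 2 by norm_num)
    linarith
  have hlogb : Real.log n ≤ Real.logb 2 n := by
    rw [Real.logb, le_div_iff₀ hlog2pos]
    nlinarith
  have hsqrt_nonneg : 0 ≤ Real.sqrt (T * Real.logb 2 n) := Real.sqrt_nonneg _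
  by_cases hc : (T:ℝ) ≤ Real.log n
  · -- trivial case: any learner makes at most T mistakes
    refine ⟨fun _ _ => false, fun P y _ => ?_⟩
    have hM : (mistakesE n (fun _ _ => false) P y T : ℝ) ≤ T := by
      have h1 : mistakesE n (fun _ _ => false) P y T ≤ T := by
        calc mistakesE n (fun _ _ => false) P y T ≤ (Finset.range T).card :=
              Finset.card_filter_le _ _
          _ = T := Finset.card_range T
      exact_mod_cast h1
    have hT2 : (T:ℝ) ≤ Real.sqrt (T * Real.logb 2 n) := by
      have h1 : (T:ℝ) = Real.sqrt (T*T) := (Real.sqrt_mul_self (le_of_lt hTpos)).symm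
      calc (T:ℝ) = Real.sqrt ((T:ℝ)*(T:ℝ)) := h1
        _ ≤ Real.sqrt ((T:ℝ) * Real.logb 2 n) := Real.sqrt_le_sqrt (by nlinarith)
    linarith
  · push_neg at hc
    set ε := Real.sqrt (Real.log n / T) with hεdef
    have hdivnn : 0 ≤ Real.log n / T := by positivity
    have hε0 : 0 < ε := Real.sqrt_pos.mpr (by positivity)
    have hε1 : ε < 1 := by
      rw [hεdef]
      rw [show (1:ℝ) = Real.sqrt 1 by simp]
      apply Real.sqrt_lt_sqrt hdivnn
      rw [div_lt_one hTpos]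
      exact hc
    have hε2 : (T:ℝ) * ε^2 = Real.log n := by
      rw [hεdef, Real.sq_sqrt hdivnn]
      field_simp
    refine ⟨wLearner n ε, fun P y hreal => ?_⟩
    obtain ⟨j, hj⟩ := hreal
    have hmain := main_bound n T ε hn hε0 hε1 P y j hj
    rw [hε2] at hmain
    have hkey : ε * Real.sqrt ((T:ℝ) * Real.log n) = Real.log n := by
      rw [hεdef, ← Real.sqrt_mul hdivnn]
      rw [show Real.log n / T * (T * Real.log n) = (Real.log n)^2 by field_simp]
      exact Real.sqrt_sq (le_of_lt hlogpos)
    have hM6 : (mistakesE n (wLearner n ε) P y T : ℝ) ≤ 6 * Real.sqrt ((T:ℝ) * Real.log n) := by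
      have h1 : (mistakesE n (wLearner n ε) P y T : ℝ) * ε ≤
          (6 * Real.sqrt ((T:ℝ) * Real.log n)) * ε := by
        calc (mistakesE n (wLearner n ε) P y T : ℝ) * ε ≤ 3 * (Real.log n + Real.log n) :=
              hmain
          _ = 6 * (ε * Real.sqrt ((T:ℝ) * Real.log n)) := by rw [hkey]; ring
          _ = (6 * Real.sqrt ((T:ℝ) * Real.log n)) * ε := by ring
      exact le_of_mul_le_mul_right h1 hε0
    have hmono : Real.sqrt ((T:ℝ) * Real.log n) ≤ Real.sqrt ((T:ℝ) * Real.logb 2 n) := by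
      apply Real.sqrt_le_sqrt
      apply mul_le_mul_of_nonneg_left hlogb (le_of_lt hTpos)
    calc (mistakesE n (wLearner n ε) P y T : ℝ)
        ≤ 6 * Real.sqrt ((T:ℝ) * Real.log n) := hM6
      _ ≤ 7 * Real.sqrt ((T:ℝ) * Real.logb 2 n) + 1 := by nlinarith
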